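/- Let μ_R be a probability measure on [0,R] with density bounded below by c₁(R-r)^{κ-1} on [r₀,R] for some r₀ < R, c₁ > 0 and integer κ ≥ 1. Then there exists c > 0 such that for all sufficiently large t, ∫₀^R r^{2t} dμ_R(r) ≥ c R^{2t} (2t+1)^{-κ}. -/

import Mathlib

open MeasureTheory

/-- If `μ_R` is a probability measure on `[0,R]` whose density is bounded below by
`c₁ (R-r)^{κ-1}` on `[r₀,R]`, then there exists `c > 0` such that for all large `t`,
`∫₀^R r^{2t} dμ_R ≥ c R^{2t} (2t+1)^{-κ}`. -/
theorem stmt16 (R r₀ : ℝ) (hR : 0 < R) (hr₀ : 0 ≤ r₀) (hr₀R : r₀ < R)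
    (c₁ : ℝ) (hc₁ : 0 < c₁) (κ : ℕ) (hκ : 1 ≤ κ)
    (μR : Measure ℝ) [IsProbabilityMeasure μR]
    (hsuppR : μR (Set.Icc 0 R)ᶜ = 0)
    (hlb : (volume.restrict (Set.Icc r₀ R)).withDensity
        (fun r => ENNReal.ofReal (c₁ * (R - r) ^ (κ - 1))) ≤ μR) :
    ∃ c > 0, ∃ T : ℕ, ∀ t ≥ T,
      c * R ^ (2 * t) / (2 * (t : ℝ) + 1) ^ κ ≤ ∫ r, r ^ (2 * t) ∂μR := by
  have hRr₀ : 0 < R - r₀ := by linarith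
  refine ⟨c₁ * R ^ κ / (2 * 8 ^ κ), by positivity, ⌈R / (R - r₀)⌉₊, fun t ht => ?_⟩
  set n : ℝ := (t : ℝ) with hn_def
  have hn : 0 ≤ n := Nat.cast_nonneg t
  have hTn : R / (R - r₀) ≤ n := le_trans (Nat.le_ceil _) (Nat.cast_le.mpr ht)
  have h4 : (0:ℝ) < 4 * n + 4 := by linarith
  have h8 : (0:ℝ) < 8 * n + 8 := by linarith
  set a := R - R / (4 * n + 4) with ha_def
  set b := R - R / (8 * n + 8) with hb_def
  have hRn : R ≤ n * (R - r₀) := (div_le_iff₀ hRr₀).mp hTn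
  have har₀ : r₀ ≤ a := by
    have h1 : R / (4 * n + 4) ≤ R - r₀ := by
      rw [div_le_iff₀ h4]; nlinarith
    simp only [ha_def]; linarith
  have ha_pos : 0 ≤ a := le_trans hr₀ har₀
  have hab : a ≤ b := by
    have : R / (8 * n + 8) ≤ R / (4 * n + 4) :=
      div_le_div_of_nonneg_left hR.le h4 (by linarith)
    simp only [ha_def, hb_def]; linarith
  have hbR : b < R := by
    have : 0 < R / (8 * n + 8) := div_pos hR h8
    simp only [hb_def]; linarith
  have hRL : 0 < R / (8 * n + 8) := div_pos hR h8
  set L : ℝ := c₁ * (R ^ (2*t) / 2) * (R / (8 * n + 8)) ^ (κ - 1) with hL_def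
  have hL_pos : 0 < L := by positivity
  -- r ^ (2t) lower bound on [a, b]
  have hpow : R ^ (2*t) / 2 ≤ a ^ (2*t) := by
    have ha_eq : a = R * (1 + -(1 / (4 * n + 4))) := by
      simp only [ha_def]; field_simp; ring
    have hbern : 1 + ((2*t : ℕ) : ℝ) * (-(1 / (4 * n + 4))) ≤
        (1 + -(1 / (4 * n + 4))) ^ (2*t) := by
      apply one_add_mul_le_pow
      have : (1:ℝ) / (4 * n + 4) ≤ 1 := by
        rw [div_le_one h4]; linarith
      linarith
    have hcast : ((2*t : ℕ) : ℝ) = 2 * n := by push_cast [hn_def]; ring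
    rw [hcast] at hbern
    have hhalf : (1:ℝ)/2 ≤ 1 + 2 * n * (-(1 / (4 * n + 4))) := by
      have : 2 * n * (1 / (4 * n + 4)) ≤ 1/2 := by
        rw [mul_div_assoc' ,div_le_div_iff₀ h4 (by norm_num)]; nlinarith
      linarith
    calc R ^ (2*t) / 2 = R ^ (2*t) * (1/2) := by ring
      _ ≤ R ^ (2*t) * ((1 + -(1 / (4 * n + 4))) ^ (2*t)) := by
          apply mul_le_mul_of_nonneg_left (le_trans hhalf hbern) (by positivity)
      _ = a ^ (2*t) := by rw [ha_eq, mul_pow]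
  -- measurability
  have hmeas_f : Measurable fun r : ℝ => ENNReal.ofReal (r ^ (2*t)) :=
    (measurable_id.pow_const _).ennreal_ofReal
  have hmeas_g : Measurable fun r : ℝ => ENNReal.ofReal (c₁ * (R - r) ^ (κ-1)) := by
    apply Measurable.ennreal_ofReal
    exact ((measurable_const.sub measurable_id).pow_const _).const_mul c₁
  have step1 : ∫⁻ r in Set.Icc r₀ R,
      ENNReal.ofReal (c₁ * (R - r) ^ (κ-1)) * ENNReal.ofReal (r ^ (2*t)) ∂volume ≤
      ∫⁻ r, ENNReal.ofReal (r ^ (2*t)) ∂μR := by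
    have := lintegral_mono' hlb
      (le_refl (fun r : ℝ => ENNReal.ofReal (r ^ (2*t))))
    rwa [lintegral_withDensity_eq_lintegral_mul _ hmeas_g hmeas_f] at this
  have step2 : ENNReal.ofReal (L * (R / (8 * n + 8))) ≤
      ∫⁻ r in Set.Icc r₀ R,
        ENNReal.ofReal (c₁ * (R - r) ^ (κ-1)) * ENNReal.ofReal (r ^ (2*t)) ∂volume := by
    have hba : b - a = R / (8 * n + 8) := by
      simp only [ha_def, hb_def]; field_simp; ring
    calc ENNReal.ofReal (L * (R / (8 * n + 8)))
        = ∫⁻ _ in Set.Icc a b, ENNReal.ofReal L ∂volume := by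
          rw [setLIntegral_const, Real.volume_Icc, hba,
            ← ENNReal.ofReal_mul hL_pos.le]
      _ ≤ ∫⁻ r in Set.Icc a b,
          ENNReal.ofReal (c₁ * (R - r) ^ (κ-1)) * ENNReal.ofReal (r ^ (2*t)) ∂volume := by
          apply setLIntegral_mono (hmeas_g.mul hmeas_f)
          intro r hr
          rw [Set.mem_Icc] at hr
          obtain ⟨hr1, hr2⟩ := hr
          have hRr : R / (8 * n + 8) ≤ R - r := by
            rw [hb_def] at hr2; linarith
          have hRr0 : (0:ℝ) ≤ R - r := le_trans hRL.le hRr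
          simp only [Pi.mul_apply]
          rw [← ENNReal.ofReal_mul (mul_nonneg hc₁.le (pow_nonneg hRr0 _))]
          apply ENNReal.ofReal_le_ofReal
          have h1 : a ^ (2*t) ≤ r ^ (2*t) := pow_le_pow_left₀ ha_pos hr1 _
          have h2 : (R / (8 * n + 8)) ^ (κ-1) ≤ (R - r) ^ (κ-1) :=
            pow_le_pow_left₀ hRL.le hRr _
          have hr0 : (0:ℝ) ≤ r := le_trans ha_pos hr1
          calc L = c₁ * (R ^ (2*t) / 2) * (R / (8 * n + 8)) ^ (κ - 1) := rfl
            _ ≤ c₁ * (r ^ (2*t)) * ((R - r) ^ (κ-1)) := by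
                apply mul_le_mul _ h2 (pow_nonneg hRL.le _)
                  (mul_nonneg hc₁.le (pow_nonneg hr0 _))
                exact mul_le_mul_of_nonneg_left (le_trans hpow h1) hc₁.le
            _ = c₁ * (R - r) ^ (κ-1) * r ^ (2*t) := by ring
      _ ≤ _ := lintegral_mono_set (Set.Icc_subset_Icc har₀ hbR.le)
  -- finiteness
  have hfin : ∫⁻ r, ENNReal.ofReal (r ^ (2*t)) ∂μR < ⊤ := by
    have hae : ∀ᵐ r ∂μR, r ∈ Set.Icc 0 R := ae_iff.mpr hsuppR
    have hbd : ∀ᵐ r ∂μR, ENNReal.ofReal (r ^ (2*t)) ≤ ENNReal.ofReal (R ^ (2*t)) := by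
      filter_upwards [hae] with r hr
      exact ENNReal.ofReal_le_ofReal (pow_le_pow_left₀ hr.1 hr.2 _)
    calc ∫⁻ r, ENNReal.ofReal (r ^ (2*t)) ∂μR
        ≤ ∫⁻ _, ENNReal.ofReal (R ^ (2*t)) ∂μR := lintegral_mono_ae hbd
      _ = ENNReal.ofReal (R ^ (2*t)) := by simp
      _ < ⊤ := ENNReal.ofReal_lt_top
  have hint : ∫ r, r ^ (2*t) ∂μR = (∫⁻ r, ENNReal.ofReal (r ^ (2*t)) ∂μR).toReal := by
    rw [integral_eq_lintegral_of_nonneg_ae]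
    · exact Filter.Eventually.of_forall fun r => (even_two_mul t).pow_nonneg r
    · exact (measurable_id.pow_const _).aestronglyMeasurable
  have hmain : L * (R / (8 * n + 8)) ≤ ∫ r, r ^ (2*t) ∂μR := by
    rw [hint]
    have := ENNReal.toReal_mono hfin.ne (le_trans step2 step1)
    rwa [ENNReal.toReal_ofReal (by positivity)] at this
  refine le_trans ?_ hmain
  have hLw : L * (R / (8 * n + 8)) = c₁ * (R ^ (2*t) / 2) * (R / (8 * n + 8)) ^ κ := by
    rw [hL_def, mul_assoc, ← pow_succ, Nat.sub_add_cancel hκ]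
  rw [hLw]
  have h1 : (8*n+8)^κ ≤ (8:ℝ)^κ * (2*n+1)^κ := by
    rw [← mul_pow]
    exact pow_le_pow_left₀ (by linarith) (by linarith) κ
  have hle : R^κ / ((8:ℝ)^κ * (2*n+1)^κ) ≤ R^κ / (8*n+8)^κ :=
    div_le_div_of_nonneg_left (by positivity) (by positivity) h1
  calc c₁ * R ^ κ / (2 * 8 ^ κ) * R ^ (2 * t) / (2 * n + 1) ^ κ
      = (c₁ * R ^ (2*t) / 2) * (R^κ / ((8:ℝ)^κ * (2*n+1)^κ)) := by ring
    _ ≤ (c₁ * R ^ (2*t) / 2) * (R^κ / (8*n+8)^κ) :=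
        mul_le_mul_of_nonneg_left hle (by positivity)
    _ = c₁ * (R ^ (2*t) / 2) * (R / (8 * n + 8)) ^ κ := by rw [div_pow]; ring
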